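/- For a > 1 and b < 0, the third derivative of the Melnikov function satisfies M‴(h) < 0 for every h with 0 < h < (a² - 1)/2. -/

import Mathlib

open Real

/-- The Melnikov function `M(h; a, b)` of the discontinuous SD oscillator. -/
noncomputable def Mel (a b h : ℝ) : ℝ :=
  -(Real.pi / 4) * (a + 1) ^ 2 * (5 * a ^ 2 + 10 * a + 4 * b + 5)
    - (15 * a ^ 2 + 4 * b + 5) * Real.sqrt h / Real.sqrt 2
    - (3 * a ^ 2 + 6 * a + 2 * b + 3) * Real.pi * h
    - (13 * Real.sqrt 2 / 3) * (h * Real.sqrt h)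
    - Real.pi * h ^ 2
    - (1 / 4) * (a ^ 2 - 2 * a + 2 * h + 1) * (5 * a ^ 2 - 10 * a + 4 * b + 2 * h + 5)
        * Real.arctan (Real.sqrt (2 * h) / (a - 1))
    + (1 / 4) * (a ^ 2 + 2 * a + 2 * h + 1) * (5 * a ^ 2 + 10 * a + 4 * b + 2 * h + 5)
        * Real.arctan (Real.sqrt (2 * h) / (a + 1))

/-- `Mel` rewritten so that the only square root occurring is `√(2h)`. -/
noncomputable def Mel' (a b h : ℝ) : ℝ :=
  -(Real.pi / 4) * (a + 1) ^ 2 * (5 * a ^ 2 + 10 * a + 4 * b + 5)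
    - (15 * a ^ 2 + 4 * b + 5) / 2 * Real.sqrt (2 * h)
    - (3 * a ^ 2 + 6 * a + 2 * b + 3) * Real.pi * h
    - (13 / 3) * (h * Real.sqrt (2 * h))
    - Real.pi * h ^ 2
    - (1 / 4) * (a ^ 2 - 2 * a + 2 * h + 1) * (5 * a ^ 2 - 10 * a + 4 * b + 2 * h + 5)
        * Real.arctan (Real.sqrt (2 * h) / (a - 1))
    + (1 / 4) * (a ^ 2 + 2 * a + 2 * h + 1) * (5 * a ^ 2 + 10 * a + 4 * b + 2 * h + 5)
        * Real.arctan (Real.sqrt (2 * h) / (a + 1))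

/-- First derivative of `Mel`. -/
noncomputable def M1 (a b h : ℝ) : ℝ :=
  -((3 * a ^ 2 + 6 * a + 2 * b + 3) * Real.pi) - 6 * Real.sqrt (2 * h)
    - 2 * Real.pi * h
    - (3 * (a - 1) ^ 2 + 2 * b + 2 * h) * Real.arctan (Real.sqrt (2 * h) / (a - 1))
    + (3 * (a + 1) ^ 2 + 2 * b + 2 * h) * Real.arctan (Real.sqrt (2 * h) / (a + 1))

/-- Second derivative of `Mel`. -/
noncomputable def M2 (a b h : ℝ) : ℝ :=
  -(6 / Real.sqrt (2 * h)) - 2 * Real.pi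
    - 2 * Real.arctan (Real.sqrt (2 * h) / (a - 1))
    + 2 * Real.arctan (Real.sqrt (2 * h) / (a + 1))
    - (a - 1) * (3 * (a - 1) ^ 2 + 2 * b + 2 * h) / (((a - 1) ^ 2 + 2 * h) * Real.sqrt (2 * h))
    + (a + 1) * (3 * (a + 1) ^ 2 + 2 * b + 2 * h) / (((a + 1) ^ 2 + 2 * h) * Real.sqrt (2 * h))

/-- Third derivative of `Mel`. -/
noncomputable def M3 (a b h : ℝ) : ℝ :=
  (-(16 * h ^ 2) * ((a - 1) * ((a + 1) ^ 2 + 2 * h) ^ 2 - (a + 1) * ((a - 1) ^ 2 + 2 * h) ^ 2)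
    + 2 * b * ((a - 1) * ((a - 1) ^ 2 + 6 * h) * ((a + 1) ^ 2 + 2 * h) ^ 2
        - (a + 1) * ((a + 1) ^ 2 + 6 * h) * ((a - 1) ^ 2 + 2 * h) ^ 2))
  / ((((a - 1) ^ 2 + 2 * h) ^ 2 * ((a + 1) ^ 2 + 2 * h) ^ 2) * Real.sqrt (2 * h) ^ 3)

lemma hds {h : ℝ} (hh : 0 < h) :
    HasDerivAt (fun x : ℝ => Real.sqrt (2*x)) (1 / Real.sqrt (2*h)) h := by
  have d1 : HasDerivAt (fun x : ℝ => 2*x) 2 h := by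
    simpa using (hasDerivAt_id h).const_mul 2
  have d2 := (Real.hasDerivAt_sqrt (show 2*h ≠ 0 by positivity)).comp h d1
  have hs : (0:ℝ) < Real.sqrt (2*h) := Real.sqrt_pos.mpr (by linarith)
  refine d2.congr_deriv ?_
  symm
  field_simp

lemma hda (c : ℝ) (hc : c ≠ 0) {h : ℝ} (hh : 0 < h) :
    HasDerivAt (fun x : ℝ => Real.arctan (Real.sqrt (2*x)/c))
      (c / ((c^2 + 2*h) * Real.sqrt (2*h))) h := by
  have hs : (0:ℝ) < Real.sqrt (2*h) := Real.sqrt_pos.mpr (by linarith)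
  have hsq : Real.sqrt (2*h)^2 = 2*h := Real.sq_sqrt (by linarith)
  have d3 := (hds hh).div_const c
  have d4 := (Real.hasDerivAt_arctan (Real.sqrt (2*h)/c)).comp h d3
  have hc2 : (0:ℝ) < c^2 + 2*h := by positivity
  refine d4.congr_deriv ?_
  symm
  rw [div_pow, hsq]
  field_simp

lemma Mel_eq_Mel' (a b : ℝ) : Mel a b = Mel' a b := by
  funext x
  unfold Mel Mel'
  have h2 : Real.sqrt (2 * x) = Real.sqrt 2 * Real.sqrt x :=
    Real.sqrt_mul (by norm_num) x
  have hs2 : Real.sqrt 2 * Real.sqrt 2 = 2 :=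
    Real.mul_self_sqrt (by norm_num)
  have hs2pos : (0:ℝ) < Real.sqrt 2 := by positivity
  have key : (15 * a ^ 2 + 4 * b + 5) * Real.sqrt x / Real.sqrt 2
      = (15 * a ^ 2 + 4 * b + 5) / 2 * (Real.sqrt 2 * Real.sqrt x) := by
    field_simp
    linear_combination (-(15 * a ^ 2 + 4 * b + 5) * Real.sqrt x) * hs2
  rw [h2, key]
  ring

lemma hasDerivAt_Mel (a b : ℝ) (ha : 1 < a) {h : ℝ} (hh : 0 < h) :
    HasDerivAt (Mel a b) (M1 a b h) h := by
  rw [Mel_eq_Mel']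
  have ha1 : a - 1 ≠ 0 := by linarith
  have ha2 : a + 1 ≠ 0 := by linarith
  have hs : (0:ℝ) < Real.sqrt (2*h) := Real.sqrt_pos.mpr (by linarith)
  have hsq : Real.sqrt (2*h)^2 = 2*h := Real.sq_sqrt (by linarith)
  have dS := hds hh
  have dA := hda (a-1) ha1 hh
  have dB := hda (a+1) ha2 hh
  have t1 : HasDerivAt (fun _ : ℝ => -(Real.pi / 4) * (a + 1) ^ 2 * (5 * a ^ 2 + 10 * a + 4 * b + 5))
      0 h := hasDerivAt_const _ _
  have t2 := dS.const_mul ((15 * a ^ 2 + 4 * b + 5) / 2)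
  have t3 : HasDerivAt (fun x : ℝ => (3 * a ^ 2 + 6 * a + 2 * b + 3) * Real.pi * x)
      ((3 * a ^ 2 + 6 * a + 2 * b + 3) * Real.pi) h := by
    simpa using (hasDerivAt_id h).const_mul ((3 * a ^ 2 + 6 * a + 2 * b + 3) * Real.pi)
  have t4 := ((hasDerivAt_id h).mul dS).const_mul (13/3 : ℝ)
  have t5 : HasDerivAt (fun x : ℝ => Real.pi * x ^ 2) (Real.pi * (2 * h)) h := by
    simpa using ((hasDerivAt_pow 2 h).const_mul Real.pi)
  have p1 : HasDerivAt (fun x : ℝ => a ^ 2 - 2 * a + 2 * x + 1) 2 h := by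
    have := (((hasDerivAt_id h).const_mul 2).const_add (a ^ 2 - 2 * a)).add_const 1
    simpa using this
  have p2 : HasDerivAt (fun x : ℝ => 5 * a ^ 2 - 10 * a + 4 * b + 2 * x + 5) 2 h := by
    have := (((hasDerivAt_id h).const_mul 2).const_add (5 * a ^ 2 - 10 * a + 4 * b)).add_const 5
    simpa using this
  have q1 : HasDerivAt (fun x : ℝ => a ^ 2 + 2 * a + 2 * x + 1) 2 h := by
    have := (((hasDerivAt_id h).const_mul 2).const_add (a ^ 2 + 2 * a)).add_const 1
    simpa using this
  have q2 : HasDerivAt (fun x : ℝ => 5 * a ^ 2 + 10 * a + 4 * b + 2 * x + 5) 2 h := by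
    have := (((hasDerivAt_id h).const_mul 2).const_add (5 * a ^ 2 + 10 * a + 4 * b)).add_const 5
    simpa using this
  have t6 := ((p1.const_mul (1/4 : ℝ)).mul p2).mul dA
  have t7 := ((q1.const_mul (1/4 : ℝ)).mul q2).mul dB
  have D := (((((t1.sub t2).sub t3).sub t4).sub t5).sub t6).add t7
  refine D.congr_deriv ?_
  symm
  simp only [Pi.mul_apply, id]
  unfold M1
  set s := Real.sqrt (2*h) with hsdef
  set A := Real.arctan (s / (a - 1))
  set B := Real.arctan (s / (a + 1))
  have hh2 : h = s^2/2 := by rw [hsq]; ring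
  rw [hh2]
  have hP1 : (a-1)^2 + 2*(s^2/2) ≠ 0 := by positivity
  have hP2 : (a+1)^2 + 2*(s^2/2) ≠ 0 := by positivity
  field_simp
  ring

lemma hasDerivAt_M1 (a b : ℝ) (ha : 1 < a) {h : ℝ} (hh : 0 < h) :
    HasDerivAt (M1 a b) (M2 a b h) h := by
  have ha1 : a - 1 ≠ 0 := by linarith
  have ha2 : a + 1 ≠ 0 := by linarith
  have hs : (0:ℝ) < Real.sqrt (2*h) := Real.sqrt_pos.mpr (by linarith)
  have hsq : Real.sqrt (2*h)^2 = 2*h := Real.sq_sqrt (by linarith)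
  have dS := hds hh
  have dA := hda (a-1) ha1 hh
  have dB := hda (a+1) ha2 hh
  have t1 : HasDerivAt (fun _ : ℝ => -((3 * a ^ 2 + 6 * a + 2 * b + 3) * Real.pi)) 0 h :=
    hasDerivAt_const _ _
  have t2 := dS.const_mul (6:ℝ)
  have t3 : HasDerivAt (fun x : ℝ => 2 * Real.pi * x) (2 * Real.pi) h := by
    simpa using (hasDerivAt_id h).const_mul (2 * Real.pi)
  have g1 : HasDerivAt (fun x : ℝ => 3 * (a-1) ^ 2 + 2 * b + 2 * x) 2 h := by
    have := ((hasDerivAt_id h).const_mul 2).const_add (3 * (a-1) ^ 2 + 2 * b)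
    simpa using this
  have g2 : HasDerivAt (fun x : ℝ => 3 * (a+1) ^ 2 + 2 * b + 2 * x) 2 h := by
    have := ((hasDerivAt_id h).const_mul 2).const_add (3 * (a+1) ^ 2 + 2 * b)
    simpa using this
  have t4 := g1.mul dA
  have t5 := g2.mul dB
  have D := ((((t1.sub t2).sub t3).sub t4).add t5)
  refine D.congr_deriv ?_
  symm
  unfold M2
  set s := Real.sqrt (2*h) with hsdef
  set A := Real.arctan (s / (a - 1))
  set B := Real.arctan (s / (a + 1))
  have hh2 : h = s^2/2 := by rw [hsq]; ring
  rw [hh2]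
  have hP1 : (a-1)^2 + 2*(s^2/2) ≠ 0 := by positivity
  have hP2 : (a+1)^2 + 2*(s^2/2) ≠ 0 := by positivity
  field_simp
  ring

lemma hasDerivAt_M2 (a b : ℝ) (ha : 1 < a) {h : ℝ} (hh : 0 < h) :
    HasDerivAt (M2 a b) (M3 a b h) h := by
  have ha1 : a - 1 ≠ 0 := by linarith
  have ha2 : a + 1 ≠ 0 := by linarith
  have hs : (0:ℝ) < Real.sqrt (2*h) := Real.sqrt_pos.mpr (by linarith)
  have hsq : Real.sqrt (2*h)^2 = 2*h := Real.sq_sqrt (by linarith)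
  have hP1 : ((a-1)^2 + 2*h) ≠ 0 := by positivity
  have hP2 : ((a+1)^2 + 2*h) ≠ 0 := by positivity
  have dS := hds hh
  have dA := hda (a-1) ha1 hh
  have dB := hda (a+1) ha2 hh
  have t1 : HasDerivAt (fun x : ℝ => 6 / Real.sqrt (2*x))
      ((0 * Real.sqrt (2*h) - 6 * (1 / Real.sqrt (2*h))) / (Real.sqrt (2*h))^2) h :=
    (hasDerivAt_const h (6:ℝ)).div dS hs.ne'
  have t2 : HasDerivAt (fun _ : ℝ => 2 * Real.pi) 0 h := hasDerivAt_const _ _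
  have t3 := dA.const_mul (2:ℝ)
  have t4 := dB.const_mul (2:ℝ)
  have n1 : HasDerivAt (fun x : ℝ => (a-1) * (3 * (a-1) ^ 2 + 2 * b + 2 * x)) ((a-1) * 2) h := by
    have := (((hasDerivAt_id h).const_mul 2).const_add (3 * (a-1) ^ 2 + 2 * b)).const_mul (a-1)
    simpa using this
  have n2 : HasDerivAt (fun x : ℝ => (a+1) * (3 * (a+1) ^ 2 + 2 * b + 2 * x)) ((a+1) * 2) h := by
    have := (((hasDerivAt_id h).const_mul 2).const_add (3 * (a+1) ^ 2 + 2 * b)).const_mul (a+1)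
    simpa using this
  have d1 : HasDerivAt (fun x : ℝ => ((a-1)^2 + 2*x)) 2 h := by
    have := ((hasDerivAt_id h).const_mul 2).const_add ((a-1)^2)
    simpa using this
  have d2 : HasDerivAt (fun x : ℝ => ((a+1)^2 + 2*x)) 2 h := by
    have := ((hasDerivAt_id h).const_mul 2).const_add ((a+1)^2)
    simpa using this
  have e1 := d1.mul dS
  have e2 := d2.mul dS
  have hg1 : ((a-1)^2 + 2*h) * Real.sqrt (2*h) ≠ 0 := by positivity
  have hg2 : ((a+1)^2 + 2*h) * Real.sqrt (2*h) ≠ 0 := by positivity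
  have t5 := n1.div e1 hg1
  have t6 := n2.div e2 hg2
  have D := (((((t1.neg).sub t2).sub t3).add t4).sub t5).add t6
  refine D.congr_deriv ?_
  symm
  simp only [Pi.mul_apply, id]
  unfold M3
  set s := Real.sqrt (2*h) with hsdef
  set A := Real.arctan (s / (a - 1))
  set B := Real.arctan (s / (a + 1))
  have hh2 : h = s^2/2 := by rw [hsq]; ring
  rw [hh2]
  have hQ1 : (a-1)^2 + 2*(s^2/2) ≠ 0 := by positivity
  have hQ2 : (a+1)^2 + 2*(s^2/2) ≠ 0 := by positivity
  field_simp
  ring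

/-- For `a > 1` and `b < 0`, `M'''(h) < 0` for every `0 < h < (a² - 1)/2`. -/
theorem melnikov_third_deriv_neg (a b : ℝ) (ha : 1 < a) (hb : b < 0) :
    ∀ h : ℝ, 0 < h → h < (a ^ 2 - 1) / 2 →
      deriv (deriv (deriv (Mel a b))) h < 0 := by
  intro h hh hlt
  have key1 : ∀ x : ℝ, 0 < x → deriv (Mel a b) x = M1 a b x :=
    fun x hx => (hasDerivAt_Mel a b ha hx).deriv
  have key2 : ∀ x : ℝ, 0 < x → deriv (deriv (Mel a b)) x = M2 a b x := by
    intro x hx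
    have ev : deriv (Mel a b) =ᶠ[nhds x] M1 a b := by
      filter_upwards [Ioi_mem_nhds hx] with y hy
      exact key1 y hy
    rw [ev.deriv_eq]
    exact (hasDerivAt_M1 a b ha hx).deriv
  have key3 : deriv (deriv (deriv (Mel a b))) h = M3 a b h := by
    have ev : deriv (deriv (Mel a b)) =ᶠ[nhds h] M2 a b := by
      filter_upwards [Ioi_mem_nhds hh] with y hy
      exact key2 y hy
    rw [ev.deriv_eq]
    exact (hasDerivAt_M2 a b ha hh).deriv
  rw [key3]
  -- now show `M3 a b h < 0`
  have hq : 0 < a ^ 2 - 1 := by nlinarith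
  have htq : 2 * h < a ^ 2 - 1 := by linarith
  have hqt : 0 < a ^ 2 - 1 - 2 * h := by linarith
  have hE1 : 0 < (a - 1) * ((a + 1) ^ 2 + 2 * h) ^ 2 - (a + 1) * ((a - 1) ^ 2 + 2 * h) ^ 2 := by
    nlinarith [mul_pos hh hqt, mul_pos hq hh, mul_pos hq hq]
  have hE2 : 0 < (a - 1) * ((a - 1) ^ 2 + 6 * h) * ((a + 1) ^ 2 + 2 * h) ^ 2
      - (a + 1) * ((a + 1) ^ 2 + 6 * h) * ((a - 1) ^ 2 + 2 * h) ^ 2 := by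
    nlinarith [pow_pos hq 3, mul_pos (mul_pos hq hq) hh, mul_pos hq hh,
      mul_pos (mul_pos hh hh) hqt, mul_pos hh hqt]
  have hs : (0:ℝ) < Real.sqrt (2*h) := Real.sqrt_pos.mpr (by linarith)
  have hP1 : (0:ℝ) < (a - 1) ^ 2 + 2 * h := by nlinarith [sq_nonneg (a-1)]
  have hP2 : (0:ℝ) < (a + 1) ^ 2 + 2 * h := by nlinarith [sq_nonneg (a+1)]
  unfold M3
  apply div_neg_of_neg_of_pos
  · nlinarith [mul_pos (pow_pos hh 2) hE1, mul_pos (neg_pos.mpr hb) hE2]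
  · exact mul_pos (mul_pos (pow_pos hP1 2) (pow_pos hP2 2)) (pow_pos hs 3)
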